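/- With $I = I_2(H)+I_2(V)$ the toric double determinantal ideal, the quotient ring $S = R/I$ is an integral domain. -/

import Mathlib

/-- The ideal generated by all 2×2 minors of a matrix. -/
def minors2 {R : Type*} [CommRing R] {α β : Type*} (M : Matrix α β R) : Ideal R :=
  Ideal.span { p | ∃ i i' j j', p = M i j * M i' j' - M i j' * M i' j }

namespace ToricDD

open MvPolynomial Finsupp

variable {k : Type*} [CommRing k] {r m n : ℕ}

/-- horizontal concatenation matrix -/
noncomputable def Hm (k : Type*) [CommRing k] (r m n : ℕ) :
    Matrix (Fin m) (Fin r × Fin n) (MvPolynomial (Fin r × Fin m × Fin n) k) :=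
  fun i q => X (q.1, i, q.2)

/-- vertical concatenation matrix -/
noncomputable def Vm (k : Type*) [CommRing k] (r m n : ℕ) :
    Matrix (Fin r × Fin m) (Fin n) (MvPolynomial (Fin r × Fin m × Fin n) k) :=
  fun p j => X (p.1, p.2, j)

/-- The toric double determinantal ideal. -/
noncomputable def I₀ (k : Type*) [CommRing k] (r m n : ℕ) : Ideal (MvPolynomial (Fin r × Fin m × Fin n) k) :=
  minors2 (Hm k r m n) + minors2 (Vm k r m n)

/-- the i-swap binomial is in the ideal -/
lemma swapI_mem (l l' : Fin r) (i i' : Fin m) (j j' : Fin n) :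
    (X (l,i,j) * X (l',i',j') - X (l,i',j) * X (l',i,j') : MvPolynomial _ k) ∈ I₀ k r m n := by
  apply Ideal.mem_sup_left
  apply Ideal.subset_span
  exact ⟨i, i', (l,j), (l',j'), by simp [Hm]; ring⟩

/-- the j-swap binomial is in the ideal -/
lemma swapJ_mem (l l' : Fin r) (i i' : Fin m) (j j' : Fin n) :
    (X (l,i,j) * X (l',i',j') - X (l,i,j') * X (l',i',j) : MvPolynomial _ k) ∈ I₀ k r m n := by
  apply Ideal.mem_sup_right
  apply Ideal.subset_span
  exact ⟨(l,i), (l',i'), j, j', by simp [Vm]⟩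

/-- product of variables indexed by a multiset -/
noncomputable def P (k : Type*) [CommRing k] {r m n : ℕ} (s : Multiset (Fin r × Fin m × Fin n)) :
    MvPolynomial (Fin r × Fin m × Fin n) k :=
  (s.map X).prod

lemma P_cons (a : Fin r × Fin m × Fin n) (s : Multiset (Fin r × Fin m × Fin n)) :
    P k (a ::ₘ s) = X a * P k s := by
  simp [P]

lemma swap_i_mem (x z : Fin r × Fin m × Fin n) (c : Multiset (Fin r × Fin m × Fin n)) :
    P k (x ::ₘ z ::ₘ c) - P k ((x.1, z.2.1, x.2.2) ::ₘ (z.1, x.2.1, z.2.2) ::ₘ c)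
      ∈ I₀ k r m n := by
  rw [P_cons, P_cons, P_cons, P_cons, show
    X x * (X z * P k c) - X (x.1, z.2.1, x.2.2) * (X (z.1, x.2.1, z.2.2) * P k c)
    = (X (x.1, x.2.1, x.2.2) * X (z.1, z.2.1, z.2.2)
        - X (x.1, z.2.1, x.2.2) * X (z.1, x.2.1, z.2.2)) * P k c from by ring]
  exact Ideal.mul_mem_right _ _ (swapI_mem x.1 z.1 x.2.1 z.2.1 x.2.2 z.2.2)

lemma swap_j_mem (x z : Fin r × Fin m × Fin n) (c : Multiset (Fin r × Fin m × Fin n)) :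
    P k (x ::ₘ z ::ₘ c) - P k ((x.1, x.2.1, z.2.2) ::ₘ (z.1, z.2.1, x.2.2) ::ₘ c)
      ∈ I₀ k r m n := by
  rw [P_cons, P_cons, P_cons, P_cons, show
    X x * (X z * P k c) - X (x.1, x.2.1, z.2.2) * (X (z.1, z.2.1, x.2.2) * P k c)
    = (X (x.1, x.2.1, x.2.2) * X (z.1, z.2.1, z.2.2)
        - X (x.1, x.2.1, z.2.2) * X (z.1, z.2.1, x.2.2)) * P k c from by ring]
  exact Ideal.mul_mem_right _ _ (swapJ_mem x.1 z.1 x.2.1 z.2.1 x.2.2 z.2.2)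

lemma step_fix_i (s : Multiset (Fin r × Fin m × Fin n)) (l : Fin r) (i : Fin m)
    (hx : ∃ x ∈ s, x.1 = l) (hi : i ∈ s.map (·.2.1)) :
    ∃ s', (P k s - P k s' ∈ I₀ k r m n) ∧ s'.map (·.1) = s.map (·.1) ∧
      s'.map (·.2.1) = s.map (·.2.1) ∧ s'.map (·.2.2) = s.map (·.2.2) ∧ ∃ j', (l, i, j') ∈ s' := by
  obtain ⟨x, hxs, hx1⟩ := hx
  by_cases hxi : x.2.1 = i
  · exact ⟨s, by rw [sub_self]; exact (I₀ k r m n).zero_mem, rfl, rfl, rfl, x.2.2,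
      by rw [← hx1, ← hxi]; exact hxs⟩
  · obtain ⟨z, hzs, hzi⟩ := Multiset.mem_map.mp hi
    have hne : z ≠ x := by rintro rfl; exact hxi hzi
    have hz' : z ∈ s.erase x := (Multiset.mem_erase_of_ne hne).2 hzs
    have hs : s = x ::ₘ z ::ₘ ((s.erase x).erase z) := by
      rw [Multiset.cons_erase hz', Multiset.cons_erase hxs]
    refine ⟨(x.1, z.2.1, x.2.2) ::ₘ (z.1, x.2.1, z.2.2) ::ₘ ((s.erase x).erase z),
      ?_, ?_, ?_, ?_, x.2.2, ?_⟩
    · have h0 := swap_i_mem (k := k) x z ((s.erase x).erase z)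
      rw [← hs] at h0; exact h0
    · conv_rhs => rw [hs]
      simp [Multiset.map_cons]
    · conv_rhs => rw [hs]
      simp only [Multiset.map_cons]
      exact Multiset.cons_swap _ _ _
    · conv_rhs => rw [hs]
      simp [Multiset.map_cons]
    · rw [show ((l, i, x.2.2) : Fin r × Fin m × Fin n) = (x.1, z.2.1, x.2.2) from by
        rw [hx1, hzi]]
      exact Multiset.mem_cons_self _ _

lemma step_fix_j (s : Multiset (Fin r × Fin m × Fin n)) (l : Fin r) (i : Fin m) (j : Fin n)
    (hx : ∃ j', (l, i, j') ∈ s) (hj : j ∈ s.map (·.2.2)) :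
    ∃ s', (P k s - P k s' ∈ I₀ k r m n) ∧ s'.map (·.1) = s.map (·.1) ∧
      s'.map (·.2.1) = s.map (·.2.1) ∧ s'.map (·.2.2) = s.map (·.2.2) ∧ (l, i, j) ∈ s' := by
  obtain ⟨j', hxs⟩ := hx
  by_cases hxj : j' = j
  · exact ⟨s, by rw [sub_self]; exact (I₀ k r m n).zero_mem, rfl, rfl, rfl, hxj ▸ hxs⟩
  · obtain ⟨z, hzs, hzj⟩ := Multiset.mem_map.mp hj
    have hne : z ≠ (l, i, j') := by rintro rfl; exact hxj hzj
    have hz' : z ∈ s.erase (l, i, j') := (Multiset.mem_erase_of_ne hne).2 hzs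
    have hs : s = (l, i, j') ::ₘ z ::ₘ ((s.erase (l, i, j')).erase z) := by
      rw [Multiset.cons_erase hz', Multiset.cons_erase hxs]
    refine ⟨(l, i, z.2.2) ::ₘ (z.1, z.2.1, j') ::ₘ ((s.erase (l, i, j')).erase z),
      ?_, ?_, ?_, ?_, ?_⟩
    · have h0 := swap_j_mem (k := k) (l, i, j') z ((s.erase (l, i, j')).erase z)
      rw [← hs] at h0; exact h0
    · conv_rhs => rw [hs]
      simp [Multiset.map_cons]
    · conv_rhs => rw [hs]
      simp [Multiset.map_cons]
    · conv_rhs => rw [hs]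
      simp only [Multiset.map_cons]
      exact Multiset.cons_swap _ _ _
    · rw [← hzj]
      exact Multiset.mem_cons_self _ _

/-- key combinatorial lemma: equal marginals imply congruence mod I₀ -/
lemma marg_congr : ∀ (N : ℕ) (s t : Multiset (Fin r × Fin m × Fin n)),
    Multiset.card s ≤ N →
    s.map (·.1) = t.map (·.1) → s.map (·.2.1) = t.map (·.2.1) → s.map (·.2.2) = t.map (·.2.2) →
    P k s - P k t ∈ I₀ k r m n := by
  intro N
  induction N with
  | zero =>
    intro s t hc h1 h2 h3
    obtain rfl : s = 0 := Multiset.card_eq_zero.1 (Nat.le_zero.1 hc)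
    obtain rfl : t = 0 := by
      have := congrArg Multiset.card h1
      simpa using this.symm
    simp
  | succ N ih =>
    intro s t hc h1 h2 h3
    rcases Multiset.empty_or_exists_mem t with rfl | ⟨a, ha⟩
    · obtain rfl : s = 0 := by
        have := congrArg Multiset.card h1
        simpa using this
      simp
    obtain ⟨l, i, j⟩ := a
    have hl : l ∈ s.map (·.1) := by
      rw [h1]; exact Multiset.mem_map_of_mem _ ha
    obtain ⟨x, hx, hx1⟩ := Multiset.mem_map.mp hl
    have hi : i ∈ s.map (·.2.1) := by
      rw [h2]; exact Multiset.mem_map_of_mem _ ha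
    obtain ⟨s₁, d1, m1, m2, m3, j₁, hj₁⟩ := step_fix_i (k := k) s l i ⟨x, hx, hx1⟩ hi
    have hj : j ∈ s₁.map (·.2.2) := by
      rw [m3, h3]; exact Multiset.mem_map_of_mem _ ha
    obtain ⟨s₂, d2, n1, n2, n3, hmem⟩ := step_fix_j (k := k) s₁ l i j ⟨j₁, hj₁⟩ hj
    set c₂ := s₂.erase (l, i, j) with hc₂
    set t' := t.erase (l, i, j) with ht'
    have hs₂ : (l, i, j) ::ₘ c₂ = s₂ := Multiset.cons_erase hmem
    have hts : (l, i, j) ::ₘ t' = t := Multiset.cons_erase ha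
    have key : ∀ {γ : Type} (g : Fin r × Fin m × Fin n → γ),
        s₂.map g = t.map g → c₂.map g = t'.map g := by
      intro γ g hg
      rw [← Multiset.cons_inj_right (g (l, i, j)),
        show (g (l,i,j) ::ₘ Multiset.map g c₂) = (((l,i,j) ::ₘ c₂).map g) from
        (Multiset.map_cons _ _ _).symm, hs₂,
        show (g (l,i,j) ::ₘ Multiset.map g t') = (((l,i,j) ::ₘ t').map g) from
        (Multiset.map_cons _ _ _).symm, hts, hg]
    have e1 := key _ (n1.trans (m1.trans h1))
    have e2 := key _ (n2.trans (m2.trans h2))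
    have e3 := key _ (n3.trans (m3.trans h3))
    have hcard : Multiset.card c₂ ≤ N := by
      have hcs : Multiset.card s₂ = Multiset.card s := by
        have := congrArg Multiset.card (n1.trans m1)
        simpa using this
      have hlt : Multiset.card c₂ < Multiset.card s₂ := Multiset.card_erase_lt_of_mem hmem
      omega
    have ihm := ih c₂ t' hcard e1 e2 e3
    have key2 : P k s₂ - P k t ∈ I₀ k r m n := by
      rw [← hs₂, ← hts, P_cons, P_cons, ← mul_sub]
      exact Ideal.mul_mem_left _ _ ihm
    have : P k s - P k t = (P k s - P k s₁) + ((P k s₁ - P k s₂) + (P k s₂ - P k t)) := by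
      ring
    rw [this]
    exact add_mem d1 (add_mem d2 key2)

abbrev τ (r m n : ℕ) := Fin r ⊕ Fin m ⊕ Fin n

noncomputable def φ (k : Type*) [CommRing k] (r m n : ℕ) :
    MvPolynomial (Fin r × Fin m × Fin n) k →ₐ[k] MvPolynomial (τ r m n) k :=
  aeval fun p => X (Sum.inl p.1) * X (Sum.inr (Sum.inl p.2.1)) * X (Sum.inr (Sum.inr p.2.2))

/-- the marginal exponent map -/
noncomputable def marg (u : Fin r × Fin m × Fin n →₀ ℕ) : τ r m n →₀ ℕ :=
  mapDomain (fun p => Sum.inl p.1) u + mapDomain (fun p => Sum.inr (Sum.inl p.2.1)) u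
    + mapDomain (fun p => Sum.inr (Sum.inr p.2.2)) u

lemma marg_eq_sum (u : Fin r × Fin m × Fin n →₀ ℕ) :
    marg u = u.sum fun p e => single (Sum.inl p.1) e + single (Sum.inr (Sum.inl p.2.1)) e
      + single (Sum.inr (Sum.inr p.2.2)) e := by
  rw [marg, mapDomain, mapDomain, mapDomain]
  rw [← Finsupp.sum_add, ← Finsupp.sum_add]

lemma φ_monomial (u : Fin r × Fin m × Fin n →₀ ℕ) (c : k) :
    φ k r m n (monomial u c) = monomial (marg u) c := by
  rw [φ, aeval_monomial, marg_eq_sum, monomial_finsupp_sum_index, algebraMap_eq]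
  congr 1
  apply Finsupp.prod_congr
  intro p _
  rw [show (X (Sum.inl p.1) * X (Sum.inr (Sum.inl p.2.1)) * X (Sum.inr (Sum.inr p.2.2)) :
      MvPolynomial (τ r m n) k) = monomial (single (Sum.inl p.1) 1
        + single (Sum.inr (Sum.inl p.2.1)) 1 + single (Sum.inr (Sum.inr p.2.2)) 1) 1 by
      rw [X, X, X, monomial_mul, monomial_mul]; simp]
  rw [monomial_pow, one_pow]
  congr 1
  simp [smul_add, Finsupp.smul_single]

/-- equal marg gives equal multiset marginals -/
lemma marg_eq_imp {u w : Fin r × Fin m × Fin n →₀ ℕ} (h : marg u = marg w) :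
    u.toMultiset.map (·.1) = w.toMultiset.map (·.1) ∧
    u.toMultiset.map (·.2.1) = w.toMultiset.map (·.2.1) ∧
    u.toMultiset.map (·.2.2) = w.toMultiset.map (·.2.2) := by
  have key : ∀ (g : Fin r × Fin m × Fin n → Fin r ⊕ Fin m ⊕ Fin n), Function.Injective g →
      (∀ p q, g p = g q → True) → True := fun _ _ _ => trivial
  have e1 : mapDomain (·.1) u = mapDomain (·.1) w := by
    ext l
    have := congrFun (congrArg (⇑) h) (Sum.inl l)
    simpa [marg, Finsupp.add_apply,
      mapDomain_notin_range (f := fun p : Fin r × Fin m × Fin n => Sum.inr (Sum.inl p.2.1)) _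
        (Sum.inl l) (by simp),
      mapDomain_notin_range (f := fun p : Fin r × Fin m × Fin n => Sum.inr (Sum.inr p.2.2)) _
        (Sum.inl l) (by simp),
      show (fun p : Fin r × Fin m × Fin n => Sum.inl p.1 : _ → Fin r ⊕ Fin m ⊕ Fin n)
        = Sum.inl ∘ (·.1) from rfl, mapDomain_comp,
      mapDomain_apply Sum.inl_injective] using this
  have e2 : mapDomain (·.2.1) u = mapDomain (·.2.1) w := by
    ext i
    have := congrFun (congrArg (⇑) h) (Sum.inr (Sum.inl i))
    simpa [marg, Finsupp.add_apply,
      mapDomain_notin_range (f := fun p : Fin r × Fin m × Fin n => Sum.inl p.1) _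
        (Sum.inr (Sum.inl i)) (by simp),
      mapDomain_notin_range (f := fun p : Fin r × Fin m × Fin n => Sum.inr (Sum.inr p.2.2)) _
        (Sum.inr (Sum.inl i)) (by simp),
      show (fun p : Fin r × Fin m × Fin n => Sum.inr (Sum.inl p.2.1) : _ → Fin r ⊕ Fin m ⊕ Fin n)
        = (Sum.inr ∘ Sum.inl) ∘ (·.2.1) from rfl, mapDomain_comp,
      mapDomain_comp (f := Sum.inl) (g := Sum.inr),
      mapDomain_apply (Sum.inr_injective (α := Fin r) (β := Fin m ⊕ Fin n)),
      mapDomain_apply (Sum.inl_injective (α := Fin m) (β := Fin n))] using this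
  have e3 : mapDomain (·.2.2) u = mapDomain (·.2.2) w := by
    ext j
    have := congrFun (congrArg (⇑) h) (Sum.inr (Sum.inr j))
    simpa [marg, Finsupp.add_apply,
      mapDomain_notin_range (f := fun p : Fin r × Fin m × Fin n => Sum.inl p.1) _
        (Sum.inr (Sum.inr j)) (by simp),
      mapDomain_notin_range (f := fun p : Fin r × Fin m × Fin n => Sum.inr (Sum.inl p.2.1)) _
        (Sum.inr (Sum.inr j)) (by simp),
      show (fun p : Fin r × Fin m × Fin n => Sum.inr (Sum.inr p.2.2) : _ → Fin r ⊕ Fin m ⊕ Fin n)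
        = (Sum.inr ∘ Sum.inr) ∘ (·.2.2) from rfl, mapDomain_comp,
      mapDomain_comp (f := Sum.inr) (g := Sum.inr),
      mapDomain_apply (Sum.inr_injective (α := Fin r) (β := Fin m ⊕ Fin n)),
      mapDomain_apply (Sum.inr_injective (α := Fin m) (β := Fin n))] using this
  refine ⟨?_, ?_, ?_⟩ <;> rw [toMultiset_map, toMultiset_map]
  · rw [e1]
  · rw [e2]
  · rw [e3]

lemma P_toMultiset (u : Fin r × Fin m × Fin n →₀ ℕ) :
    P k u.toMultiset = monomial u (1 : k) := by
  induction u using Finsupp.induction with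
  | zero => simp [P]
  | single_add a b f _ _ ih =>
    rw [toMultiset_add, toMultiset_single, monomial_single_add]
    rw [← ih]
    simp [P, Multiset.nsmul_singleton, Multiset.map_replicate, Multiset.prod_replicate]

/-- binomial membership from equal marginals -/
lemma binomial_mem {u w : Fin r × Fin m × Fin n →₀ ℕ} (h : marg u = marg w) :
    (monomial u 1 - monomial w (1 : k)) ∈ I₀ k r m n := by
  obtain ⟨h1, h2, h3⟩ := marg_eq_imp h
  rw [← P_toMultiset, ← P_toMultiset]
  exact marg_congr (Multiset.card u.toMultiset) _ _ le_rfl h1 h2 h3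

lemma I₀_le_ker : I₀ k r m n ≤ RingHom.ker (φ k r m n) := by
  rw [I₀]
  apply sup_le <;> rw [minors2, Ideal.span_le] <;> rintro p ⟨i, i', q, q', rfl⟩ <;>
    simp only [SetLike.mem_coe, RingHom.mem_ker, Hm, Vm, map_sub, map_mul] <;>
    simp only [φ, aeval_X] <;> ring

lemma coeff_φ (f : MvPolynomial (Fin r × Fin m × Fin n) k) (v : τ r m n →₀ ℕ) :
    MvPolynomial.coeff v (φ k r m n f)
      = ∑ w ∈ f.support, if marg w = v then f.coeff w else 0 := by
  classical
  conv_lhs => rw [f.as_sum]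
  rw [map_sum]
  rw [MvPolynomial.coeff_sum]
  apply Finset.sum_congr rfl
  intro w _
  rw [φ_monomial, coeff_monomial]

lemma ker_le_I₀ : RingHom.ker (φ k r m n).toRingHom ≤ I₀ k r m n := by
  classical
  intro f hf
  rw [RingHom.mem_ker] at hf
  replace hf : φ k r m n f = 0 := hf
  obtain ⟨N, hN⟩ : ∃ N, f.support.card ≤ N := ⟨_, le_rfl⟩
  induction N generalizing f with
  | zero =>
    have : f = 0 := by
      rwa [Nat.le_zero, Finset.card_eq_zero, MvPolynomial.support_eq_empty] at hN
    simp [this]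
  | succ N ih =>
    by_cases hf0 : f = 0
    · simp [hf0]
    obtain ⟨u, hu⟩ := (MvPolynomial.support_nonempty.2 hf0)
    set S : Finset (Fin r × Fin m × Fin n →₀ ℕ) :=
      f.support.filter (fun w => marg w = marg u) with hS
    have hsum0 : ∑ w ∈ S, f.coeff w = 0 := by
      have := coeff_φ f (marg u)
      rw [hf] at this
      simpa [hS, Finset.sum_filter] using this.symm
    set g : MvPolynomial (Fin r × Fin m × Fin n) k :=
      ∑ w ∈ S, f.coeff w • (monomial w 1 - monomial u (1 : k)) with hg
    have hgI : g ∈ I₀ k r m n := by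
      apply Ideal.sum_mem
      intro w hw
      rw [MvPolynomial.smul_eq_C_mul]
      exact Ideal.mul_mem_left _ _ (binomial_mem (Finset.mem_filter.1 hw).2)
    have hgeq : g = ∑ w ∈ S, monomial w (f.coeff w) := by
      rw [hg]
      rw [Finset.sum_congr rfl (fun w _ => smul_sub (f.coeff w) _ _), Finset.sum_sub_distrib]
      rw [← Finset.sum_smul]
      rw [hsum0, zero_smul, sub_zero]
      apply Finset.sum_congr rfl
      intro w _
      rw [MvPolynomial.smul_monomial, smul_eq_mul, mul_one]
    set f' := f - g with hf'
    have hcoeff : ∀ x, f'.coeff x = if x ∈ S then 0 else f.coeff x := by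
      intro x
      rw [hf', MvPolynomial.coeff_sub, hgeq, MvPolynomial.coeff_sum]
      by_cases hx : x ∈ S
      · rw [Finset.sum_eq_single x (fun b _ hb => by rw [coeff_monomial, if_neg hb])
          (fun h => absurd hx h)]
        simp [coeff_monomial, hx]
      · rw [if_neg hx]
        rw [Finset.sum_eq_zero, sub_zero]
        intro b hb
        rw [coeff_monomial, if_neg]
        rintro rfl; exact hx hb
    have hsupp : f'.support ⊆ f.support \ S := by
      intro x hx
      rw [MvPolynomial.mem_support_iff, hcoeff] at hx
      by_cases hxS : x ∈ S
      · simp [hxS] at hx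
      · rw [if_neg hxS] at hx
        exact Finset.mem_sdiff.2 ⟨MvPolynomial.mem_support_iff.2 hx, hxS⟩
    have huS : u ∈ S := Finset.mem_filter.2 ⟨hu, rfl⟩
    have hcard : f'.support.card ≤ N := by
      have h1 : f.support \ S ⊂ f.support :=
        Finset.sdiff_ssubset (Finset.filter_subset _ _) ⟨u, huS⟩
      have := Finset.card_le_card hsupp
      have := Finset.card_lt_card h1
      omega
    have hφf' : φ k r m n f' = 0 := by
      rw [hf', map_sub, hf, zero_sub, neg_eq_zero]
      exact I₀_le_ker hgI
    have : f' ∈ I₀ k r m n := ih hφf' hcard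
    have : f' + g ∈ I₀ k r m n := Ideal.add_mem _ this hgI
    simpa [hf'] using this

lemma I₀_eq_ker : I₀ k r m n = RingHom.ker (φ k r m n).toRingHom :=
  le_antisymm I₀_le_ker ker_le_I₀

end ToricDD

theorem toric_double_determinantal_quotient_isDomain (k : Type*) [Field k] (r m n : ℕ)
    (hr : 2 ≤ r) (hm : 2 ≤ m) (hn : 2 ≤ n)
    (H : Matrix (Fin m) (Fin r × Fin n) (MvPolynomial (Fin r × Fin m × Fin n) k))
    (V : Matrix (Fin r × Fin m) (Fin n) (MvPolynomial (Fin r × Fin m × Fin n) k))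
    (hH : ∀ i q, H i q = MvPolynomial.X (q.1, i, q.2))
    (hV : ∀ p j, V p j = MvPolynomial.X (p.1, p.2, j)) :
    IsDomain (MvPolynomial (Fin r × Fin m × Fin n) k ⧸ (minors2 H + minors2 V)) := by
  have hHm : H = ToricDD.Hm k r m n := by funext i q; exact hH i q
  have hVm : V = ToricDD.Vm k r m n := by funext p j; exact hV p j
  rw [hHm, hVm]
  rw [show minors2 (ToricDD.Hm k r m n) + minors2 (ToricDD.Vm k r m n) = ToricDD.I₀ k r m n from rfl]
  rw [Ideal.Quotient.isDomain_iff_prime, ToricDD.I₀_eq_ker]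
  exact RingHom.ker_isPrime _
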